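/- An invertible r×r matrix g over a field F admits a decomposition g = n h n_- with n unipotent upper triangular, h invertible diagonal, n_- unipotent lower triangular if and only if every lower-right square submatrix (g_{k,ℓ})_{k,ℓ ≥ i}, 1 ≤ i ≤ r, has nonzero determinant. -/
import Mathlib


/-- upper triangular unipotent matrices -/
def UpperUnip {F : Type*} [Field F] {r : ℕ} (m : Matrix (Fin r) (Fin r) F) : Prop :=
  (∀ i, m i i = 1) ∧ ∀ i j : Fin r, j < i → m i j = 0

/-- lower triangular unipotent matrices -/
def LowerUnip {F : Type*} [Field F] {r : ℕ} (m : Matrix (Fin r) (Fin r) F) : Prop :=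
  (∀ i, m i i = 1) ∧ ∀ i j : Fin r, i < j → m i j = 0

/-- the lower right square submatrix `(g_{k,ℓ})_{k,ℓ ≥ i}` of `g`
(rows and columns with 0-based index `≥ i`) -/
def cornerBlock {F : Type*} [Field F] {r : ℕ} (g : Matrix (Fin r) (Fin r) F)
    (i : ℕ) : Matrix (Fin (r - i)) (Fin (r - i)) F :=
  fun k l => g ⟨i + (k : ℕ), by have := k.isLt; omega⟩
               ⟨i + (l : ℕ), by have := l.isLt; omega⟩
namespace UDLaux
open Matrix
set_option linter.unusedSectionVars false

variable {F : Type*} [Field F] {r : ℕ}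

lemma upperUnip_det {m : Matrix (Fin r) (Fin r) F} (h : UpperUnip m) : m.det = 1 := by
  rw [Matrix.det_of_upperTriangular (fun i j hij => h.2 i j hij)]
  simp [h.1]

lemma lowerUnip_det {m : Matrix (Fin r) (Fin r) F} (h : LowerUnip m) : m.det = 1 := by
  rw [Matrix.det_of_lowerTriangular m (fun i j hij => h.2 i j hij)]
  simp [h.1]

/-- block matrix with scalar corner -/
def blk (a : F) (b c : Fin r → F) (M : Matrix (Fin r) (Fin r) F) :
    Matrix (Fin (r + 1)) (Fin (r + 1)) F :=
  fun k l => Fin.cases (Fin.cases a b l) (fun k' => Fin.cases (c k') (fun l' => M k' l') l) k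

variable {a : F} {b c : Fin r → F} {M : Matrix (Fin r) (Fin r) F}
@[simp] lemma blk_zero_zero : blk a b c M 0 0 = a := rfl
@[simp] lemma blk_zero_succ (l : Fin r) : blk a b c M 0 l.succ = b l := rfl
@[simp] lemma blk_succ_zero (k : Fin r) : blk a b c M k.succ 0 = c k := rfl
@[simp] lemma blk_succ_succ (k l : Fin r) : blk a b c M k.succ l.succ = M k l := rfl

lemma blk_mul (a a' : F) (b c b' c' : Fin r → F) (M M' : Matrix (Fin r) (Fin r) F) :
    blk a b c M * blk a' b' c' M' =
      blk (a * a' + b ⬝ᵥ c') (a • b' + b ᵥ* M') (a' • c + M *ᵥ c')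
        (Matrix.vecMulVec c b' + M * M') := by
  ext k l
  rw [Matrix.mul_apply]
  induction k using Fin.cases <;> induction l using Fin.cases <;>
    simp [Fin.sum_univ_succ, Matrix.mul_apply, Matrix.vecMulVec_apply, dotProduct,
      Matrix.mulVec, Matrix.vecMul, mul_comm]

lemma blk_eq (g : Matrix (Fin (r + 1)) (Fin (r + 1)) F) :
    g = blk (g 0 0) (fun l => g 0 l.succ) (fun k => g k.succ 0) (fun k l => g k.succ l.succ) := by
  ext k l
  induction k using Fin.cases <;> induction l using Fin.cases <;> rfl

lemma det_blk_upper (a : F) (b : Fin r → F) (M : Matrix (Fin r) (Fin r) F) :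
    (blk a b 0 M).det = a * M.det := by
  rw [Matrix.det_succ_column_zero]
  rw [Fin.sum_univ_succ]
  simp only [blk_zero_zero]
  have h0 : ∀ k : Fin r, blk a b (0 : Fin r → F) M k.succ 0 = 0 := fun k => rfl
  simp only [h0, mul_zero, zero_mul, Finset.sum_const_zero, add_zero]
  have hsub : ((blk a b 0 M).submatrix (Fin.succAbove 0) Fin.succ) = M := by
    ext k l
    simp [Matrix.submatrix_apply, Fin.succAbove_zero]
  rw [hsub]
  simp


lemma corner_zero (g : Matrix (Fin r) (Fin r) F) : cornerBlock g 0 = g := by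
  ext k l
  unfold cornerBlock
  congr 1 <;> exact Fin.ext (by simp)

lemma sum_corner (i : ℕ) (f : Fin r → F) (hf : ∀ p : Fin r, (p : ℕ) < i → f p = 0) :
    ∑ p : Fin r, f p = ∑ q : Fin (r - i), f ⟨i + (q : ℕ), by have := q.isLt; omega⟩ := by
  classical
  let emb : Fin (r - i) ↪ Fin r :=
    ⟨fun q => ⟨i + (q : ℕ), by have := q.isLt; omega⟩, by
      intro q q' hq
      rw [Fin.mk.injEq] at hq
      exact Fin.ext (by omega)⟩
  have h1 : ∑ q : Fin (r - i), f (emb q) = ∑ p ∈ Finset.univ.map emb, f p :=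
    (Finset.sum_map Finset.univ emb f).symm
  have h2 : ∑ p ∈ Finset.univ.map emb, f p = ∑ p : Fin r, f p := by
    apply Finset.sum_subset (Finset.subset_univ _)
    intro p _ hp
    apply hf
    by_contra hlt
    push_neg at hlt
    exact hp (Finset.mem_map.2 ⟨⟨(p : ℕ) - i, by have := p.isLt; omega⟩, Finset.mem_univ _,
      Fin.ext (show i + ((p : ℕ) - i) = (p : ℕ) by omega)⟩)
  rw [← h2, ← h1]
  rfl

lemma corner_isDiag {h : Matrix (Fin r) (Fin r) F} (hh : h.IsDiag) (i : ℕ) :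
    (cornerBlock h i).IsDiag := by
  intro k l hkl
  apply hh
  intro hq
  rw [Fin.mk.injEq] at hq
  exact hkl (Fin.ext (by omega))

lemma corner_upperUnip {n : Matrix (Fin r) (Fin r) F} (hn : UpperUnip n) (i : ℕ) :
    UpperUnip (cornerBlock n i) := by
  constructor
  · intro k; exact hn.1 _
  · intro k l hkl
    have hkl' : (l : ℕ) < (k : ℕ) := hkl
    exact hn.2 _ _ (show i + (l : ℕ) < i + (k : ℕ) by omega)

lemma corner_lowerUnip {n : Matrix (Fin r) (Fin r) F} (hn : LowerUnip n) (i : ℕ) :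
    LowerUnip (cornerBlock n i) := by
  constructor
  · intro k; exact hn.1 _
  · intro k l hkl
    have hkl' : (k : ℕ) < (l : ℕ) := hkl
    exact hn.2 _ _ (show i + (k : ℕ) < i + (l : ℕ) by omega)

lemma corner_of_mul {n h n' : Matrix (Fin r) (Fin r) F} (hn : UpperUnip n) (hh : h.IsDiag)
    (hn' : LowerUnip n') (i : ℕ) :
    cornerBlock (n * h * n') i = cornerBlock n i * cornerBlock h i * cornerBlock n' i := by
  have hd : ∀ x p : Fin r, (n * h) x p = n x p * h p p := by
    intro x p
    rw [Matrix.mul_apply]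
    exact Finset.sum_eq_single_of_mem p (Finset.mem_univ p)
      (fun m _ hm => by rw [hh hm, mul_zero])
  have hcd : ∀ x p : Fin (r - i), (cornerBlock n i * cornerBlock h i) x p =
      cornerBlock n i x p * cornerBlock h i p p := by
    intro x p
    rw [Matrix.mul_apply]
    exact Finset.sum_eq_single_of_mem p (Finset.mem_univ p)
      (fun m _ hm => by rw [corner_isDiag hh i hm, mul_zero])
  ext k l
  show (n * h * n') _ _ = _
  rw [Matrix.mul_apply]
  simp_rw [hd]
  rw [show (cornerBlock n i * cornerBlock h i * cornerBlock n' i) k l =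
    ∑ q : Fin (r - i), (cornerBlock n i * cornerBlock h i) k q * cornerBlock n' i q l from
      Matrix.mul_apply]
  simp_rw [hcd]
  exact sum_corner i _ (fun p hp => by
    rw [hn'.2 p _ (show (p : ℕ) < i + (l : ℕ) by omega), mul_zero])

lemma isDiag_det_eq {h : Matrix (Fin r) (Fin r) F} (hh : h.IsDiag) :
    h.det = ∏ j : Fin r, h j j :=
  Matrix.det_of_upperTriangular (fun k l hkl => hh (ne_of_gt hkl))

lemma forward_dir {g n h n' : Matrix (Fin r) (Fin r) F} (hn : UpperUnip n) (hh : h.IsDiag)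
    (hdet : IsUnit h.det) (hn' : LowerUnip n') (hE : g = n * h * n') :
    ∀ i : Fin r, (cornerBlock g (i : ℕ)).det ≠ 0 := by
  intro i
  have hdne : ∀ j : Fin r, h j j ≠ 0 := by
    intro j
    have := hdet.ne_zero
    rw [isDiag_det_eq hh] at this
    exact fun hz => this (Finset.prod_eq_zero (Finset.mem_univ j) hz)
  rw [hE, corner_of_mul hn hh hn', Matrix.det_mul, Matrix.det_mul,
    upperUnip_det (corner_upperUnip hn _), lowerUnip_det (corner_lowerUnip hn' _),
    isDiag_det_eq (corner_isDiag hh _)]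
  simp only [one_mul, mul_one]
  exact Finset.prod_ne_zero_iff.2 (fun q _ => hdne _)


@[simp] lemma vecMulVec_zero_left (b : Fin r → F) :
    Matrix.vecMulVec (0 : Fin r → F) b = 0 := by
  ext k l
  simp [Matrix.vecMulVec_apply]

lemma det_corner_succ (g : Matrix (Fin (r + 1)) (Fin (r + 1)) F) (i : ℕ) :
    (cornerBlock (fun k l => g k.succ l.succ) i).det = (cornerBlock g (i + 1)).det := by
  have heq : r + 1 - (i + 1) = r - i := by omega
  have hsub : cornerBlock g (i + 1) =
      (cornerBlock (fun k l => g k.succ l.succ) i).submatrix (finCongr heq) (finCongr heq) := by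
    ext k l
    simp only [cornerBlock, Matrix.submatrix_apply, finCongr_apply]
    congr 1 <;>
      exact Fin.ext (by simp only [Fin.val_succ, Fin.coe_cast]; omega)
  rw [hsub, Matrix.det_submatrix_equiv_self]

lemma converse_dir : ∀ (r : ℕ) (g : Matrix (Fin r) (Fin r) F),
    (∀ i : Fin r, (cornerBlock g (i : ℕ)).det ≠ 0) →
    ∃ n h n' : Matrix (Fin r) (Fin r) F, UpperUnip n ∧ h.IsDiag ∧ IsUnit h.det ∧
      LowerUnip n' ∧ g = n * h * n' := by
  intro r
  induction r with
  | zero =>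
    intro g _
    exact ⟨1, 1, 1, ⟨fun i => i.elim0, fun i => i.elim0⟩, Matrix.isDiag_one, by simp,
      ⟨fun i => i.elim0, fun i => i.elim0⟩, Subsingleton.elim _ _⟩
  | succ r IH =>
    intro g hyp
    set G : Matrix (Fin r) (Fin r) F := fun k l => g k.succ l.succ with hGdef
    have hG : ∀ i : Fin r, (cornerBlock G (i : ℕ)).det ≠ 0 := by
      intro i
      rw [hGdef, det_corner_succ]
      exact hyp ⟨(i : ℕ) + 1, by omega⟩
    obtain ⟨N, H, N', hN, hH, hHdet, hN', hGE⟩ := IH G hG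
    have hNdet : N.det = 1 := upperUnip_det hN
    have hN'det : N'.det = 1 := lowerUnip_det hN'
    have h1 : IsUnit (H * N').det := by rw [Matrix.det_mul, hN'det, mul_one]; exact hHdet
    have h2 : IsUnit (N * H).det := by rw [Matrix.det_mul, hNdet, one_mul]; exact hHdet
    set b : Fin r → F := fun l => g 0 l.succ with hb
    set c : Fin r → F := fun k => g k.succ 0 with hc
    set u : Fin r → F := b ᵥ* (H * N')⁻¹ with hu
    set v : Fin r → F := (N * H)⁻¹ *ᵥ c with hv
    set d : F := g 0 0 - (u ᵥ* H) ⬝ᵥ v with hd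
    have keyu : u ᵥ* (H * N') = b := by
      rw [hu, Matrix.vecMul_vecMul, Matrix.nonsing_inv_mul _ h1, Matrix.vecMul_one]
    have keyv : (N * H) *ᵥ v = c := by
      rw [hv, Matrix.mulVec_mulVec, Matrix.mul_nonsing_inv _ h2, Matrix.one_mulVec]
    have hmul : blk 1 u 0 N * blk d 0 0 H * blk 1 0 v N' = blk (g 0 0) b c G := by
      rw [blk_mul, blk_mul]
      simp only [one_mul, mul_one, dotProduct_zero, zero_dotProduct, add_zero, zero_add,
        one_smul, smul_zero, Matrix.mulVec_zero, vecMulVec_zero_left, Matrix.vecMul_vecMul]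
      rw [keyu, keyv, ← hGE, hd, sub_add_cancel]
    have hgeq : g = blk 1 u 0 N * blk d 0 0 H * blk 1 0 v N' := by
      rw [hmul]
      exact blk_eq g
    have hun : UpperUnip (blk 1 u 0 N) := by
      constructor
      · intro i
        induction i using Fin.cases with
        | zero => rfl
        | succ k => exact hN.1 k
      · intro i j hij
        induction i using Fin.cases with
        | zero => exact absurd (hij : (j : ℕ) < 0) (Nat.not_lt_zero _)
        | succ k =>
          induction j using Fin.cases with
          | zero => rfl
          | succ l => exact hN.2 k l (by simpa using hij)
    have hln : LowerUnip (blk 1 0 v N') := by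
      constructor
      · intro i
        induction i using Fin.cases with
        | zero => rfl
        | succ k => exact hN'.1 k
      · intro i j hij
        induction j using Fin.cases with
        | zero => exact absurd (hij : (i : ℕ) < 0) (Nat.not_lt_zero _)
        | succ l =>
          induction i using Fin.cases with
          | zero => rfl
          | succ k => exact hN'.2 k l (by simpa using hij)
    have hdiag : (blk d 0 0 H).IsDiag := by
      intro i j hij
      induction i using Fin.cases with
      | zero =>
        induction j using Fin.cases with
        | zero => exact absurd rfl hij
        | succ l => rfl
      | succ k =>
        induction j using Fin.cases with
        | zero => rfl
        | succ l => exact hH (fun hkl => hij (congrArg Fin.succ hkl))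
    have hgdet : g.det ≠ 0 := by
      have h0 := hyp 0
      rwa [show (((0 : Fin (r + 1)) : ℕ)) = 0 from rfl, corner_zero] at h0
    have hdet2 : g.det = d * H.det := by
      rw [hgeq, Matrix.det_mul, Matrix.det_mul, upperUnip_det hun, lowerUnip_det hln,
        det_blk_upper, one_mul, mul_one]
    refine ⟨blk 1 u 0 N, blk d 0 0 H, blk 1 0 v N', hun, hdiag, ?_, hln, hgeq⟩
    rw [det_blk_upper]
    exact isUnit_iff_ne_zero.2 (hdet2 ▸ hgdet)

end UDLaux

/-- An invertible matrix `g` admits a UDL decomposition `g = n h n_-`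
(`n` unipotent upper triangular, `h` invertible diagonal, `n_-` unipotent
lower triangular) if and only if every lower-right corner block of `g` has
nonzero determinant. -/
theorem UDL_exists_iff_corner_dets_ne_zero {F : Type*} [Field F] {r : ℕ}
    (g : Matrix (Fin r) (Fin r) F) (hg : IsUnit g.det) :
    (∃ n h n' : Matrix (Fin r) (Fin r) F, UpperUnip n ∧ h.IsDiag ∧
        IsUnit h.det ∧ LowerUnip n' ∧ g = n * h * n') ↔
      ∀ i : Fin r, (cornerBlock g (i : ℕ)).det ≠ 0 := by
  constructor
  · rintro ⟨n, h, n', hn, hh, hdet, hn', hE⟩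
    exact UDLaux.forward_dir hn hh hdet hn' hE
  · exact UDLaux.converse_dir r g
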